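/- Let λ>0, μ>0 and let z, z':[0,∞)→ℂ be measurable with ‖z‖_λ < ∞, ‖z'‖_λ < ∞ and μ‖z‖_λ < λ. Let Θ and Θ' be asymptotic characteristics for z and z' respectively, with ‖Θ(t,ϑ,ω) − ϑ − ωt‖_λ < ∞ and ‖Θ'(t,ϑ,ω) − ϑ − ωt‖_λ < ∞. Then ‖Θ − Θ'‖_λ ≤ μ‖z − z'‖_λ / (λ(1 − (μ/λ)‖z‖_λ)). -/

import Mathlib

open MeasureTheory

noncomputable section

/-- Weighted sup-norm `sup_{t ≥ 0} |z t| e^{l t}` for `z : ℝ → ℂ`. -/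
def expNormZ (l : ℝ) (z : ℝ → ℂ) : ℝ :=
  ⨆ t : {t : ℝ // 0 ≤ t}, ‖z t.1‖ * Real.exp (l * t.1)

/-- Finiteness of the weighted sup-norm for `z : ℝ → ℂ`. -/
def ExpBddZ (l : ℝ) (z : ℝ → ℂ) : Prop :=
  BddAbove (Set.range fun t : {t : ℝ // 0 ≤ t} => ‖z t.1‖ * Real.exp (l * t.1))

/-- Weighted sup-norm `sup_{t ≥ 0, ϑ, ω} |h t ϑ ω| e^{l t}`. -/
def expNormH (l : ℝ) (h : ℝ → ℝ → ℝ → ℂ) : ℝ :=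
  ⨆ p : {t : ℝ // 0 ≤ t} × ℝ × ℝ, ‖h p.1.1 p.2.1 p.2.2‖ * Real.exp (l * p.1.1)

/-- Finiteness of the weighted sup-norm for `h`. -/
def ExpBddH (l : ℝ) (h : ℝ → ℝ → ℝ → ℂ) : Prop :=
  BddAbove (Set.range fun p : {t : ℝ // 0 ≤ t} × ℝ × ℝ =>
    ‖h p.1.1 p.2.1 p.2.2‖ * Real.exp (l * p.1.1))

/-- `Θ` is an asymptotic characteristic for the order parameter `z`, with coupling `μ`:
`Θ(t,ϑ,ω) = ϑ + ωt + μ ∫_t^∞ Im(e^{iΘ(s,ϑ,ω)} conj(z s)) ds` for all `t ≥ 0`. -/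
def IsAsymChar (μ : ℝ) (z : ℝ → ℂ) (Θ : ℝ → ℝ → ℝ → ℝ) : Prop :=
  ∀ t : ℝ, 0 ≤ t → ∀ ϑ ω : ℝ,
    Θ t ϑ ω = ϑ + ω * t + μ * ∫ s in Set.Ioi t,
      (Complex.exp (Complex.I * (Θ s ϑ ω : ℂ)) * (starRingEnd ℂ) (z s)).im

open Set

/-! ### Auxiliary lemmas -/

lemma AsymCharAux.abs_exp_I_mul_sub (a b : ℝ) :
    ‖Complex.exp (Complex.I * a) - Complex.exp (Complex.I * b)‖ ≤ |a - b| := by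
  have hd : ∀ x : ℝ, HasDerivAt (fun y : ℝ => Complex.exp (Complex.I * y))
      (Complex.I * Complex.exp (Complex.I * x)) x := by
    intro x
    have h1 : HasDerivAt (fun z : ℂ => Complex.exp (Complex.I * z))
        (Complex.exp (Complex.I * x) * Complex.I) (x : ℂ) := by
      simpa using ((hasDerivAt_id (x : ℂ)).const_mul Complex.I).cexp
    simpa [mul_comm] using h1.comp_ofReal
  have := Convex.norm_image_sub_le_of_norm_hasDerivWithin_le
    (f := fun y : ℝ => Complex.exp (Complex.I * y))
    (f' := fun x : ℝ => Complex.I * Complex.exp (Complex.I * x)) (C := 1)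
    (fun x _ => (hd x).hasDerivWithinAt)
    (fun x _ => by
      rw [norm_mul, Complex.norm_I, one_mul, mul_comm,
        Complex.norm_exp_ofReal_mul_I])
    convex_univ (Set.mem_univ b) (Set.mem_univ a)
  simpa [Real.norm_eq_abs] using this

lemma AsymCharAux.le_mul_exp_neg {a Z x : ℝ} (h : a * Real.exp x ≤ Z) :
    a ≤ Z * Real.exp (-x) := by
  rw [Real.exp_neg, ← div_eq_mul_inv, le_div_iff₀ (Real.exp_pos x)]
  exact h

lemma AsymCharAux.integral_exp_neg_mul_Ioi {b : ℝ} (hb : 0 < b) (t : ℝ) :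
    ∫ s in Set.Ioi t, Real.exp (-b * s) = Real.exp (-b * t) / b := by
  have hderiv : ∀ x ∈ Ici t, HasDerivAt (fun s : ℝ => -Real.exp (-b * s) / b)
      (Real.exp (-b * x)) x := by
    intro x _
    simpa [hb.ne'] using ((hasDerivAt_id x).const_mul b).neg.exp.neg.div_const b
  have htend : Filter.Tendsto (fun s : ℝ => -Real.exp (-b * s) / b) Filter.atTop (nhds 0) := by
    have : Filter.Tendsto (fun s : ℝ => -Real.exp (-b * s) / b) Filter.atTop (nhds (-0 / b)) := by
      refine Filter.Tendsto.div_const (Filter.Tendsto.neg ?_) _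
      exact Real.tendsto_exp_atBot.comp (Filter.tendsto_id.const_mul_atTop_of_neg
        (neg_neg_iff_pos.2 hb))
    simpa using this
  have := integral_Ioi_of_hasDerivAt_of_tendsto
    (hderiv t self_mem_Ici).continuousAt.continuousWithinAt
    (fun x hx => hderiv x (mem_Ici.2 (le_of_lt hx))) (exp_neg_integrableOn_Ioi t hb) htend
  rw [this]
  ring

lemma AsymCharAux.abs_im_exp_mul_conj (θ : ℝ) (w : ℂ) :
    |(Complex.exp (Complex.I * (θ : ℂ)) * (starRingEnd ℂ) w).im| ≤ ‖w‖ := by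
  calc |(Complex.exp (Complex.I * (θ : ℂ)) * (starRingEnd ℂ) w).im|
      ≤ ‖Complex.exp (Complex.I * (θ : ℂ)) * (starRingEnd ℂ) w‖ :=
        Complex.abs_im_le_norm _
    _ = ‖w‖ := by
        rw [norm_mul, Complex.norm_conj, mul_comm Complex.I, Complex.norm_exp_ofReal_mul_I, one_mul]

/-- Bootstrap: the integrand of an asymptotic characteristic is automatically integrable
on every `(t, ∞)` with `t ≥ 0`. -/
lemma AsymCharAux.integrableOn_asymChar_integrand {l μ : ℝ} (hl : 0 < l) {z : ℝ → ℂ}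
    (hz : Measurable z) {C : ℝ}
    (hC : ∀ s : ℝ, 0 ≤ s → ‖z s‖ ≤ C * Real.exp (-l * s))
    {Θ : ℝ → ℝ → ℝ → ℝ} (hΘ : IsAsymChar μ z Θ) (ϑ ω : ℝ) :
    ∀ t : ℝ, 0 ≤ t → IntegrableOn
      (fun s => (Complex.exp (Complex.I * (Θ s ϑ ω : ℂ)) * (starRingEnd ℂ) (z s)).im)
      (Set.Ioi t) := by
  set f : ℝ → ℝ :=
    fun s => (Complex.exp (Complex.I * (Θ s ϑ ω : ℂ)) * (starRingEnd ℂ) (z s)).im with hf_def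
  set g : ℝ → ℝ :=
    fun s => (Complex.exp (Complex.I * ((ϑ + ω * s : ℝ) : ℂ)) * (starRingEnd ℂ) (z s)).im
    with hg_def
  have hgm : Measurable g := by
    apply Complex.measurable_im.comp
    apply Measurable.mul
    · exact Complex.measurable_exp.comp
        (measurable_const.mul (Complex.measurable_ofReal.comp
          (measurable_const.add (measurable_const.mul measurable_id))))
    · exact (Complex.continuous_conj.measurable).comp hz
  have hbound : ∀ s : ℝ, 0 ≤ s → |f s| ≤ C * Real.exp (-l * s) := fun s hs =>
    (AsymCharAux.abs_im_exp_mul_conj _ _).trans (hC s hs)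
  have hgbound : ∀ s : ℝ, 0 ≤ s → |g s| ≤ C * Real.exp (-l * s) := fun s hs =>
    (AsymCharAux.abs_im_exp_mul_conj _ _).trans (hC s hs)
  have hdom : ∀ t : ℝ, IntegrableOn (fun s => C * Real.exp (-l * s)) (Set.Ioi t) :=
    fun t => (exp_neg_integrableOn_Ioi t hl).const_mul C
  have key : ∀ t : ℝ, 0 ≤ t → AEStronglyMeasurable f (volume.restrict (Set.Ioi t)) →
      IntegrableOn f (Set.Ioi t) := by
    intro t ht hm
    refine Integrable.mono' (hdom t) hm ?_
    refine (ae_restrict_iff' measurableSet_Ioi).2 (Filter.Eventually.of_forall fun s hs => ?_)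
    simpa [Real.norm_eq_abs] using hbound s (ht.trans (le_of_lt hs))
  have hgint : ∀ t : ℝ, 0 ≤ t → IntegrableOn g (Set.Ioi t) := by
    intro t ht
    refine Integrable.mono' (hdom t) hgm.aestronglyMeasurable.restrict ?_
    refine (ae_restrict_iff' measurableSet_Ioi).2 (Filter.Eventually.of_forall fun s hs => ?_)
    simpa [Real.norm_eq_abs] using hgbound s (ht.trans (le_of_lt hs))
  by_cases hS : ∃ t0 : ℝ, 0 ≤ t0 ∧ IntegrableOn f (Set.Ioi t0)
  · obtain ⟨t0, ht0, hft0⟩ := hS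
    set S : Set ℝ := {t : ℝ | 0 ≤ t ∧ IntegrableOn f (Set.Ioi t)} with hS_def
    have hne : S.Nonempty := ⟨t0, ht0, hft0⟩
    have hbdd : BddBelow S := ⟨0, fun x hx => hx.1⟩
    set c : ℝ := sInf S with hc_def
    have hc0 : 0 ≤ c := le_csInf hne fun x hx => hx.1
    have hmono : ∀ t u : ℝ, t ∈ S → t ≤ u → 0 ≤ u → u ∈ S := fun t u htS htu hu =>
      ⟨hu, htS.2.mono_set (Set.Ioi_subset_Ioi htu)⟩
    have hGT : ∀ t : ℝ, c < t → IntegrableOn f (Set.Ioi t) := by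
      intro t ht
      obtain ⟨u, huS, hut⟩ := (csInf_lt_iff hbdd hne).1 ht
      exact huS.2.mono_set (Set.Ioi_subset_Ioi hut.le)
    have hcS : c ∈ S := by
      refine ⟨hc0, key c hc0 ?_⟩
      have hU : Set.Ioi c = ⋃ n : ℕ, Set.Ioi (c + 1 / (n + 1)) := by
        ext x
        simp only [Set.mem_Ioi, Set.mem_iUnion]
        constructor
        · intro hx
          obtain ⟨n, hn⟩ := exists_nat_one_div_lt (sub_pos.2 hx)
          exact ⟨n, by linarith⟩
        · rintro ⟨n, hn⟩
          have : (0:ℝ) < 1 / (n + 1) := by positivity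
          linarith
      rw [hU, aestronglyMeasurable_iUnion_iff]
      intro n
      have : (0:ℝ) < 1 / ((n:ℝ) + 1) := by positivity
      exact (hGT _ (by linarith)).1
    intro t ht
    rcases le_or_gt c t with h | h
    · exact (hmono c t hcS h ht).2
    · have hIoo : IntegrableOn f (Set.Ioo t c) := by
        have heq : Set.EqOn g f (Set.Ioo t c) := by
          intro s hs
          have hs0 : 0 ≤ s := ht.trans hs.1.le
          have hsnotS : s ∉ S := fun hmem => absurd (csInf_le hbdd hmem) (not_le.2 hs.2)
          have hnint : ¬ IntegrableOn f (Set.Ioi s) := fun h' => hsnotS ⟨hs0, h'⟩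
          have hΘs : Θ s ϑ ω = ϑ + ω * s := by
            have := hΘ s hs0 ϑ ω
            rwa [integral_undef hnint, mul_zero, add_zero] at this
          simp only [hg_def, hf_def, hΘs]
        exact IntegrableOn.congr_fun ((hgint t ht).mono_set Set.Ioo_subset_Ioi_self)
          heq measurableSet_Ioo
      have hIci : IntegrableOn f (Set.Ici c) :=
        (integrableOn_Ici_iff_integrableOn_Ioi enorm_ne_top).2 hcS.2
      have := hIoo.union hIci
      rwa [Set.Ioo_union_Ici_eq_Ioi h] at this
  · exfalso
    apply hS
    refine ⟨0, le_refl 0, key 0 (le_refl 0) ?_⟩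
    have heq : Set.EqOn g f (Set.Ioi 0) := by
      intro s hs
      have hs0 : 0 ≤ s := hs.le
      have hnint : ¬ IntegrableOn f (Set.Ioi s) := fun h' => hS ⟨s, hs0, h'⟩
      have hΘs : Θ s ϑ ω = ϑ + ω * s := by
        have := hΘ s hs0 ϑ ω
        rwa [integral_undef hnint, mul_zero, add_zero] at this
      simp only [hg_def, hf_def, hΘs]
    exact hgm.aestronglyMeasurable.restrict.congr
      ((ae_restrict_iff' measurableSet_Ioi).2 (Filter.Eventually.of_forall heq))

/-- Estimate for the difference of two asymptotic characteristics (Lemma 3 of the paper). -/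
theorem asymChar_diff_exp
    (l μ : ℝ) (hl : 0 < l) (hμ : 0 < μ) (z z' : ℝ → ℂ)
    (hz : Measurable z) (hz' : Measurable z')
    (hzb : ExpBddZ l z) (hz'b : ExpBddZ l z') (hsmall : μ * expNormZ l z < l)
    (Θ Θ' : ℝ → ℝ → ℝ → ℝ) (hΘ : IsAsymChar μ z Θ) (hΘ' : IsAsymChar μ z' Θ')
    (hΘb : ExpBddH l (fun t ϑ ω => ((Θ t ϑ ω - ϑ - ω * t : ℝ) : ℂ)))
    (hΘ'b : ExpBddH l (fun t ϑ ω => ((Θ' t ϑ ω - ϑ - ω * t : ℝ) : ℂ))) :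
    expNormH l (fun t ϑ ω => ((Θ t ϑ ω - Θ' t ϑ ω : ℝ) : ℂ)) ≤
      μ * expNormZ l (fun t => z t - z' t) / (l * (1 - μ / l * expNormZ l z)) := by
  classical
  haveI : Nonempty {t : ℝ // (0:ℝ) ≤ t} := ⟨⟨0, le_refl 0⟩⟩
  set Z : ℝ := expNormZ l z with hZ_def
  set Z' : ℝ := expNormZ l z' with hZ'_def
  set W : ℝ := expNormZ l (fun t => z t - z' t) with hW_def
  set D : ℝ := expNormH l (fun t ϑ ω => ((Θ t ϑ ω - Θ' t ϑ ω : ℝ) : ℂ)) with hD_def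
  -- pointwise bounds from the sup norms
  have hZpt : ∀ s : ℝ, 0 ≤ s → ‖z s‖ ≤ Z * Real.exp (-l * s) := by
    intro s hs
    have h := le_ciSup hzb ⟨s, hs⟩
    have := AsymCharAux.le_mul_exp_neg (a := ‖z s‖) (x := l * s) h
    rwa [← neg_mul] at this
  have hZ'pt : ∀ s : ℝ, 0 ≤ s → ‖z' s‖ ≤ Z' * Real.exp (-l * s) := by
    intro s hs
    have h := le_ciSup hz'b ⟨s, hs⟩
    have := AsymCharAux.le_mul_exp_neg (a := ‖z' s‖) (x := l * s) h
    rwa [← neg_mul] at this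
  have hZnn : 0 ≤ Z := le_trans (by positivity) (le_ciSup hzb ⟨0, le_refl 0⟩)
  -- boundedness of the difference sup norms
  have hWbdd : ExpBddZ l (fun t => z t - z' t) := by
    obtain ⟨B1, hB1⟩ := hzb
    obtain ⟨B2, hB2⟩ := hz'b
    refine ⟨B1 + B2, ?_⟩
    rintro x ⟨p, rfl⟩
    have h1 := hB1 (Set.mem_range_self p)
    have h2 := hB2 (Set.mem_range_self p)
    have h3 : ‖z p.1 - z' p.1‖ ≤ ‖z p.1‖ + ‖z' p.1‖ := by
      simpa using norm_sub_le (z p.1) (z' p.1)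
    have hE : (0:ℝ) < Real.exp (l * p.1) := Real.exp_pos _
    simp only
    nlinarith [h1, h2, h3, hE]
  have hWpt : ∀ s : ℝ, 0 ≤ s → ‖z s - z' s‖ ≤ W * Real.exp (-l * s) := by
    intro s hs
    have h := le_ciSup hWbdd ⟨s, hs⟩
    have := AsymCharAux.le_mul_exp_neg (a := ‖z s - z' s‖) (x := l * s) h
    rwa [← neg_mul] at this
  have hWnn : 0 ≤ W := le_trans (by positivity) (le_ciSup hWbdd ⟨0, le_refl 0⟩)
  have hDbdd : ExpBddH l (fun t ϑ ω => ((Θ t ϑ ω - Θ' t ϑ ω : ℝ) : ℂ)) := by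
    obtain ⟨B1, hB1⟩ := hΘb
    obtain ⟨B2, hB2⟩ := hΘ'b
    refine ⟨B1 + B2, ?_⟩
    rintro x ⟨p, rfl⟩
    have h1 := hB1 (Set.mem_range_self p)
    have h2 := hB2 (Set.mem_range_self p)
    simp only [Complex.norm_real, Real.norm_eq_abs] at h1 h2 ⊢
    have h3 : |Θ p.1.1 p.2.1 p.2.2 - Θ' p.1.1 p.2.1 p.2.2|
        ≤ |Θ p.1.1 p.2.1 p.2.2 - p.2.1 - p.2.2 * p.1.1|
          + |Θ' p.1.1 p.2.1 p.2.2 - p.2.1 - p.2.2 * p.1.1| := by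
      have : Θ p.1.1 p.2.1 p.2.2 - Θ' p.1.1 p.2.1 p.2.2
          = (Θ p.1.1 p.2.1 p.2.2 - p.2.1 - p.2.2 * p.1.1)
            - (Θ' p.1.1 p.2.1 p.2.2 - p.2.1 - p.2.2 * p.1.1) := by ring
      rw [this]
      exact abs_sub _ _
    have hE : (0:ℝ) < Real.exp (l * p.1.1) := Real.exp_pos _
    nlinarith [h1, h2, h3, hE]
  have hDpt : ∀ s : ℝ, 0 ≤ s → ∀ ϑ ω : ℝ,
      |Θ s ϑ ω - Θ' s ϑ ω| ≤ D * Real.exp (-l * s) := by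
    intro s hs ϑ ω
    have h := le_ciSup hDbdd (⟨⟨s, hs⟩, ϑ, ω⟩ : {t : ℝ // 0 ≤ t} × ℝ × ℝ)
    have h2 := AsymCharAux.le_mul_exp_neg
      (a := ‖((Θ s ϑ ω - Θ' s ϑ ω : ℝ) : ℂ)‖) (x := l * s) h
    rw [← neg_mul] at h2
    rw [← Real.norm_eq_abs, ← Complex.norm_real]
    exact h2
  have hDnn : 0 ≤ D :=
    le_trans (by positivity) (le_ciSup hDbdd (⟨⟨0, le_refl 0⟩, 0, 0⟩ : {t : ℝ // 0 ≤ t} × ℝ × ℝ))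
  -- integrability of the integrands
  have hfint := fun (ϑ ω : ℝ) =>
    AsymCharAux.integrableOn_asymChar_integrand hl hz hZpt hΘ ϑ ω
  have hf'int := fun (ϑ ω : ℝ) =>
    AsymCharAux.integrableOn_asymChar_integrand hl hz' hZ'pt hΘ' ϑ ω
  -- the key pointwise estimate
  have hptwise : ∀ p : {t : ℝ // 0 ≤ t} × ℝ × ℝ,
      ‖((Θ p.1.1 p.2.1 p.2.2 - Θ' p.1.1 p.2.1 p.2.2 : ℝ) : ℂ)‖ * Real.exp (l * p.1.1)
        ≤ μ / l * Z * D + μ * W / l := by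
    rintro ⟨⟨t, ht⟩, ϑ, ω⟩
    simp only [Complex.norm_real, Real.norm_eq_abs]
    have hfθ := hfint ϑ ω t ht
    have hf'θ := hf'int ϑ ω t ht
    have hsub := integral_sub hfθ hf'θ
    have h1 : Θ t ϑ ω - Θ' t ϑ ω = μ * ∫ s in Set.Ioi t,
        ((Complex.exp (Complex.I * (Θ s ϑ ω : ℂ)) * (starRingEnd ℂ) (z s)).im
          - (Complex.exp (Complex.I * (Θ' s ϑ ω : ℂ)) * (starRingEnd ℂ) (z' s)).im) := by
      rw [hΘ t ht ϑ ω, hΘ' t ht ϑ ω, hsub]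
      ring
    have h2l : (0:ℝ) < 2 * l := by linarith
    have hGint1 : IntegrableOn (fun s : ℝ => D * Z * Real.exp (-(2 * l) * s)) (Set.Ioi t) :=
      (exp_neg_integrableOn_Ioi t h2l).const_mul (D * Z)
    have hGint2 : IntegrableOn (fun s : ℝ => W * Real.exp (-l * s)) (Set.Ioi t) :=
      (exp_neg_integrableOn_Ioi t hl).const_mul W
    have hbd : ‖∫ s in Set.Ioi t,
        ((Complex.exp (Complex.I * (Θ s ϑ ω : ℂ)) * (starRingEnd ℂ) (z s)).im
          - (Complex.exp (Complex.I * (Θ' s ϑ ω : ℂ)) * (starRingEnd ℂ) (z' s)).im)‖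
        ≤ ∫ s in Set.Ioi t,
            (D * Z * Real.exp (-(2 * l) * s) + W * Real.exp (-l * s)) := by
      refine norm_integral_le_of_norm_le (hGint1.add hGint2) ?_
      refine (ae_restrict_iff' measurableSet_Ioi).2 (Filter.Eventually.of_forall fun s hs => ?_)
      have hs0 : 0 ≤ s := ht.trans hs.le
      rw [Real.norm_eq_abs]
      have hDs := hDpt s hs0 ϑ ω
      have hZs := hZpt s hs0
      have hWs := hWpt s hs0
      have hsplit : |(Complex.exp (Complex.I * (Θ s ϑ ω : ℂ)) * (starRingEnd ℂ) (z s)).im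
            - (Complex.exp (Complex.I * (Θ' s ϑ ω : ℂ)) * (starRingEnd ℂ) (z' s)).im|
          ≤ |Θ s ϑ ω - Θ' s ϑ ω| * ‖z s‖ + ‖z s - z' s‖ := by
        have heq : (Complex.exp (Complex.I * (Θ s ϑ ω : ℂ)) * (starRingEnd ℂ) (z s)).im
            - (Complex.exp (Complex.I * (Θ' s ϑ ω : ℂ)) * (starRingEnd ℂ) (z' s)).im
            = (((Complex.exp (Complex.I * (Θ s ϑ ω : ℂ))
                  - Complex.exp (Complex.I * (Θ' s ϑ ω : ℂ))) * (starRingEnd ℂ) (z s))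
              + Complex.exp (Complex.I * (Θ' s ϑ ω : ℂ)) * (starRingEnd ℂ) (z s - z' s)).im := by
          rw [map_sub, ← Complex.sub_im]
          congr 1
          ring
        rw [heq]
        refine le_trans (Complex.abs_im_le_norm _) ?_
        refine le_trans (norm_add_le _ _) ?_
        have hA : ‖(Complex.exp (Complex.I * (Θ s ϑ ω : ℂ))
              - Complex.exp (Complex.I * (Θ' s ϑ ω : ℂ))) * (starRingEnd ℂ) (z s)‖
            ≤ |Θ s ϑ ω - Θ' s ϑ ω| * ‖z s‖ := by
          rw [norm_mul, Complex.norm_conj]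
          exact mul_le_mul_of_nonneg_right (AsymCharAux.abs_exp_I_mul_sub _ _)
            (norm_nonneg _)
        have hB : ‖Complex.exp (Complex.I * (Θ' s ϑ ω : ℂ))
              * (starRingEnd ℂ) (z s - z' s)‖ = ‖z s - z' s‖ := by
          rw [norm_mul, Complex.norm_conj, mul_comm Complex.I, Complex.norm_exp_ofReal_mul_I,
            one_mul]
        rw [hB]
        exact add_le_add_left hA _
      have hmul := mul_le_mul hDs hZs (norm_nonneg _)
        (by positivity : (0:ℝ) ≤ D * Real.exp (-l * s))
      have hee : Real.exp (-l * s) * Real.exp (-l * s) = Real.exp (-(2 * l) * s) := by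
        rw [← Real.exp_add]
        congr 1
        ring
      calc |(Complex.exp (Complex.I * (Θ s ϑ ω : ℂ)) * (starRingEnd ℂ) (z s)).im
            - (Complex.exp (Complex.I * (Θ' s ϑ ω : ℂ)) * (starRingEnd ℂ) (z' s)).im|
          ≤ |Θ s ϑ ω - Θ' s ϑ ω| * ‖z s‖ + ‖z s - z' s‖ := hsplit
        _ ≤ D * Real.exp (-l * s) * (Z * Real.exp (-l * s)) + W * Real.exp (-l * s) := by
            linarith [hmul, hWs]
        _ = D * Z * Real.exp (-(2 * l) * s) + W * Real.exp (-l * s) := by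
            rw [← hee]; ring
    have hval : ∫ s in Set.Ioi t, (D * Z * Real.exp (-(2 * l) * s) + W * Real.exp (-l * s))
        = D * Z * (Real.exp (-(2 * l) * t) / (2 * l)) + W * (Real.exp (-l * t) / l) := by
      rw [integral_add hGint1 hGint2, integral_const_mul, integral_const_mul,
        AsymCharAux.integral_exp_neg_mul_Ioi h2l t, AsymCharAux.integral_exp_neg_mul_Ioi hl t]
    have habs : |Θ t ϑ ω - Θ' t ϑ ω|
        ≤ μ * (D * Z * (Real.exp (-(2 * l) * t) / (2 * l)) + W * (Real.exp (-l * t) / l)) := by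
      rw [h1, abs_mul, abs_of_pos hμ]
      refine mul_le_mul_of_nonneg_left ?_ hμ.le
      calc |∫ s in Set.Ioi t,
            ((Complex.exp (Complex.I * (Θ s ϑ ω : ℂ)) * (starRingEnd ℂ) (z s)).im
              - (Complex.exp (Complex.I * (Θ' s ϑ ω : ℂ)) * (starRingEnd ℂ) (z' s)).im)|
          ≤ ∫ s in Set.Ioi t,
              (D * Z * Real.exp (-(2 * l) * s) + W * Real.exp (-l * s)) := by
            rw [← Real.norm_eq_abs]; exact hbd
        _ = _ := hval
    have hE1 : Real.exp (-(2 * l) * t) * Real.exp (l * t) = Real.exp (-l * t) := by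
      rw [← Real.exp_add]; congr 1; ring
    have hE2 : Real.exp (-l * t) * Real.exp (l * t) = 1 := by
      rw [← Real.exp_add]
      have : -l * t + l * t = 0 := by ring
      rw [this, Real.exp_zero]
    have h1t : Real.exp (-l * t) ≤ 1 := by
      rw [← Real.exp_zero]
      exact Real.exp_le_exp.2 (by nlinarith)
    calc |Θ t ϑ ω - Θ' t ϑ ω| * Real.exp (l * t)
        ≤ μ * (D * Z * (Real.exp (-(2 * l) * t) / (2 * l)) + W * (Real.exp (-l * t) / l))
            * Real.exp (l * t) :=
          mul_le_mul_of_nonneg_right habs (Real.exp_pos _).le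
      _ = μ * D * Z / (2 * l) * (Real.exp (-(2 * l) * t) * Real.exp (l * t))
            + μ * W / l * (Real.exp (-l * t) * Real.exp (l * t)) := by ring
      _ = μ * D * Z / (2 * l) * Real.exp (-l * t) + μ * W / l * 1 := by rw [hE1, hE2]
      _ ≤ μ / l * Z * D + μ * W / l := by
          rw [mul_one]
          have ha : μ * D * Z / (2 * l) * Real.exp (-l * t) ≤ μ * D * Z / (2 * l) :=
            mul_le_of_le_one_right (by positivity) h1t
          have hb : μ * D * Z / (2 * l) ≤ μ / l * Z * D := by
            rw [show μ / l * Z * D = μ * Z * D / l by ring, div_le_div_iff₀ h2l hl]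
            nlinarith [mul_nonneg (mul_nonneg (mul_nonneg hμ.le hZnn) hDnn) hl.le]
          linarith
  have hD_le : D ≤ μ / l * Z * D + μ * W / l := by
    have h : expNormH l (fun t ϑ ω => ((Θ t ϑ ω - Θ' t ϑ ω : ℝ) : ℂ))
        ≤ μ / l * Z * D + μ * W / l := ciSup_le hptwise
    rwa [← hD_def] at h
  have hc : μ / l * Z < 1 := by
    rw [div_mul_eq_mul_div, div_lt_one hl]
    exact hsmall
  have hlc : l * (1 - μ / l * Z) = l - μ * Z := by
    field_simp
  have hlz : (0:ℝ) < l - μ * Z := by linarith [hsmall]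
  rw [hlc, le_div_iff₀ hlz]
  have hD_le' : l * D ≤ μ * Z * D + μ * W := by
    have h := mul_le_mul_of_nonneg_left hD_le hl.le
    have e : l * (μ / l * Z * D + μ * W / l) = μ * Z * D + μ * W := by
      field_simp
    rw [e] at h
    exact h
  nlinarith [hD_le']
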